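/- For any matrix M in ℂ^{2n×2n} and every Hamiltonian matrix Q in ℂ^{2n×2n}, the residual M − (1/2)(M + J M^H J) is orthogonal to Q with respect to the real part of the Frobenius inner product: Re trace((M − (1/2)(M + J M^H J))^H Q) = 0. -/
import Mathlib


open Matrix

noncomputable def frobNorm {m k : Type*} [Fintype m] [Fintype k] (M : Matrix m k ℂ) : ℝ :=
  Real.sqrt (∑ i, ∑ j, ‖M i j‖ ^ 2)

noncomputable def Jmat (n : ℕ) : Matrix (Fin n ⊕ Fin n) (Fin n ⊕ Fin n) ℂ :=
  Matrix.fromBlocks 0 1 (-1) 0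

def IsHamiltonian {n : ℕ} (Q : Matrix (Fin n ⊕ Fin n) (Fin n ⊕ Fin n) ℂ) : Prop :=
  Q * Jmat n = (Q * Jmat n)ᴴ

/-- The projection of a matrix onto the set of Hamiltonian matrices. -/
noncomputable def hamProj {n : ℕ} (M : Matrix (Fin n ⊕ Fin n) (Fin n ⊕ Fin n) ℂ) :
    Matrix (Fin n ⊕ Fin n) (Fin n ⊕ Fin n) ℂ :=
  (1 / 2 : ℂ) • (M + Jmat n * Mᴴ * Jmat n)

lemma Jmat_conjTranspose (n : ℕ) : (Jmat n)ᴴ = -(Jmat n) := by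
  ext i j
  cases i <;> cases j <;>
    simp [Jmat, fromBlocks, conjTranspose_apply, Matrix.one_apply, apply_ite, eq_comm]

lemma Jmat_sq (n : ℕ) : Jmat n * Jmat n = -1 := by
  have := Matrix.fromBlocks_multiply (0 : Matrix (Fin n) (Fin n) ℂ)
    (1 : Matrix (Fin n) (Fin n) ℂ) (-1 : Matrix (Fin n) (Fin n) ℂ)
    (0 : Matrix (Fin n) (Fin n) ℂ) (0 : Matrix (Fin n) (Fin n) ℂ)
    (1 : Matrix (Fin n) (Fin n) ℂ) (-1 : Matrix (Fin n) (Fin n) ℂ)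
    (0 : Matrix (Fin n) (Fin n) ℂ)
  simp only [Jmat, this]
  ext i j
  cases i <;> cases j <;> simp [fromBlocks, Matrix.one_apply, eq_comm]

lemma hamil_key {n : ℕ} {Q : Matrix (Fin n ⊕ Fin n) (Fin n ⊕ Fin n) ℂ}
    (hQ : IsHamiltonian Q) : Jmat n * Q * Jmat n = Qᴴ := by
  have h : Q * Jmat n = -(Jmat n * Qᴴ) := by
    rw [hQ, conjTranspose_mul, Jmat_conjTranspose]; simp
  calc Jmat n * Q * Jmat n = Jmat n * (Q * Jmat n) := by rw [Matrix.mul_assoc]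
    _ = Jmat n * -(Jmat n * Qᴴ) := by rw [h]
    _ = -(Jmat n * Jmat n) * Qᴴ := by rw [Matrix.mul_neg, Matrix.neg_mul, Matrix.mul_assoc]
    _ = Qᴴ := by rw [Jmat_sq]; simp

/-- The residual `M − (1/2)(M + J Mᴴ J)` is orthogonal to every Hamiltonian matrix `Q`
with respect to the real part of the Frobenius inner product. -/
theorem hamProj_residual_orthogonal (n : ℕ)
    (M : Matrix (Fin n ⊕ Fin n) (Fin n ⊕ Fin n) ℂ)
    (Q : Matrix (Fin n ⊕ Fin n) (Fin n ⊕ Fin n) ℂ) (hQ : IsHamiltonian Q) :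
    (Matrix.trace ((M - (1 / 2 : ℂ) • (M + Jmat n * Mᴴ * Jmat n))ᴴ * Q)).re = 0 := by
  have h2 : trace ((Jmat n * Mᴴ * Jmat n)ᴴ * Q)
      = (starRingEnd ℂ) (trace (Mᴴ * Q)) := by
    have : (Jmat n * Mᴴ * Jmat n)ᴴ * Q = Jmat n * M * Jmat n * Q := by
      simp only [conjTranspose_mul, Jmat_conjTranspose, conjTranspose_conjTranspose]
      rw [Matrix.mul_assoc, Matrix.mul_assoc]
      simp [Matrix.neg_mul, Matrix.mul_neg, Matrix.mul_assoc]
    rw [this, Matrix.mul_assoc (Jmat n * M), Matrix.trace_mul_comm,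
      ← Matrix.mul_assoc, hamil_key hQ]
    have h3 : Qᴴ * M = (Mᴴ * Q)ᴴ := by
      rw [conjTranspose_mul, conjTranspose_conjTranspose]
    rw [h3, Matrix.trace_conjTranspose]; rfl
  have hexp : trace ((M - (1 / 2 : ℂ) • (M + Jmat n * Mᴴ * Jmat n))ᴴ * Q)
      = (1/2 : ℂ) * (trace (Mᴴ * Q) - (starRingEnd ℂ) (trace (Mᴴ * Q))) := by
    rw [← h2]
    simp only [conjTranspose_sub, conjTranspose_smul, conjTranspose_add,
      Matrix.sub_mul, Matrix.smul_mul, Matrix.add_mul, trace_sub, trace_smul, trace_add]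
    simp only [smul_eq_mul]
    rw [show star (1/2 : ℂ) = 1/2 by norm_num]
    ring
  rw [hexp]
  simp [Complex.sub_re, Complex.conj_re, Complex.mul_re]
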